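/- Let ν be the pushforward of a probability measure with Lebesgue density f* on ℝ^p under the map h(y*) = (h₁(y₁*), h₂(y₂*)), where h₁ is a diffeomorphism onto its image and h₂ maps ℝ^{p₂} to a countable set Q via a measurable partition (h₂(y₂*) = y₂ iff y₂* ∈ A_{y₂}). Then ν is absolutely continuous with respect to the product μ of Lebesgue measure on the image of h₁ and counting measure on Q, and its Radon–Nikodym density is f(y₁, y₂) = ∫_{A_{y₂}} f*(h₁⁻¹(y₁), y₂*) |det J_{h₁⁻¹}(y₁)| dy₂*. -/

import Mathlib

open MeasureTheory

/-- the pushforward `ν` of the probability measure with Lebesgue density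
`f*` under the map `h(y₁*, y₂*) = (h₁ y₁*, h₂ y₂*)` (with `h₂` given by a countable
measurable partition `{A q}`) is absolutely continuous with respect to the product `μ` of
Lebesgue measure on `Y` and counting measure on `Q`, with Radon–Nikodym density
`f(y₁, q) = ∫_{A q} f*(h₁⁻¹ y₁, z) |det J_{h₁⁻¹}(y₁)| dz`. -/
theorem pushforward_density_formula
    {p₁ p₂ : ℕ} {Q : Type*} [Countable Q] [MeasurableSpace Q] [MeasurableSingletonClass Q]
    (fstar : ((Fin p₁ → ℝ) × (Fin p₂ → ℝ)) → ENNReal)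
    (hfstar_meas : Measurable fstar)
    (hfstar_prob : ∫⁻ y, fstar y ∂(volume : Measure ((Fin p₁ → ℝ) × (Fin p₂ → ℝ))) = 1)
    (Yset : Set (Fin p₁ → ℝ)) (hYmeas : MeasurableSet Yset)
    (h₁ : (Fin p₁ → ℝ) → (Fin p₁ → ℝ)) (h₁inv : (Fin p₁ → ℝ) → (Fin p₁ → ℝ))
    (hrange : Set.range h₁ = Yset)
    (hleft : ∀ x, h₁inv (h₁ x) = x) (hright : ∀ y ∈ Yset, h₁ (h₁inv y) = y)
    (J : (Fin p₁ → ℝ) → ((Fin p₁ → ℝ) →L[ℝ] (Fin p₁ → ℝ)))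
    (hderiv : ∀ y ∈ Yset, HasFDerivWithinAt h₁inv (J y) Yset y)
    (hinj : Set.InjOn h₁inv Yset)
    (himg : h₁inv '' Yset = Set.univ)
    (A : Q → Set (Fin p₂ → ℝ)) (hAmeas : ∀ q, MeasurableSet (A q))
    (hAdisj : Pairwise (Function.onFun Disjoint A)) (hAcover : (⋃ q, A q) = Set.univ)
    (h₂ : (Fin p₂ → ℝ) → Q) (hh₂ : ∀ z q, h₂ z = q ↔ z ∈ A q)
    (h : ((Fin p₁ → ℝ) × (Fin p₂ → ℝ)) → ((Fin p₁ → ℝ) × Q))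
    (hh : h = fun y => (h₁ y.1, h₂ y.2)) (hhmeas : Measurable h) :
    (Measure.map h (volume.withDensity fstar)) ≪
        ((volume.restrict Yset).prod (Measure.count : Measure Q)) ∧
    (Measure.map h (volume.withDensity fstar)) =
      ((volume.restrict Yset).prod (Measure.count : Measure Q)).withDensity
        (fun yq : (Fin p₁ → ℝ) × Q =>
          (∫⁻ z in A yq.2, fstar (h₁inv yq.1, z) ∂(volume : Measure (Fin p₂ → ℝ))) *
            ENNReal.ofReal |(J yq.1 : (Fin p₁ → ℝ) →L[ℝ] (Fin p₁ → ℝ)).det|) := by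
  set g : (Fin p₁ → ℝ) × Q → ENNReal := fun yq =>
      (∫⁻ z in A yq.2, fstar (h₁inv yq.1, z) ∂(volume : Measure (Fin p₂ → ℝ))) *
        ENNReal.ofReal |(J yq.1 : (Fin p₁ → ℝ) →L[ℝ] (Fin p₁ → ℝ)).det| with hg
  have hm1 : Measurable h₁ := by
    have : Measurable (fun a : Fin p₁ → ℝ => (h (a, fun _ => 0)).1) :=
      measurable_fst.comp (hhmeas.comp (measurable_id.prodMk measurable_const))
    simpa [hh] using this
  set G : Q → (Fin p₁ → ℝ) → ENNReal := fun q a => ∫⁻ b in A q, fstar (a, b) with hG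
  have key : Measure.map h (volume.withDensity fstar) =
      ((volume.restrict Yset).prod (Measure.count : Measure Q)).withDensity g := by
    ext S hS
    set B : Q → Set (Fin p₁ → ℝ) := fun q => h₁ ⁻¹' {y | (y, q) ∈ S} with hB
    have hBmeas : ∀ q, MeasurableSet (B q) := fun q =>
      hm1 ((measurable_id.prodMk measurable_const) hS)
    -- LHS
    have hpre : h ⁻¹' S = ⋃ q, B q ×ˢ A q := by
      ext ⟨a, b⟩
      simp only [hh, Set.mem_preimage, Set.mem_iUnion, Set.mem_prod, hB, Set.mem_setOf_eq]
      constructor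
      · intro hx
        exact ⟨h₂ b, hx, (hh₂ b (h₂ b)).mp rfl⟩
      · rintro ⟨q, hq1, hq2⟩
        rwa [(hh₂ b q).mpr hq2]
    have hdisj : Pairwise (Function.onFun Disjoint (fun q => B q ×ˢ A q)) := by
      intro q q' hqq'
      exact Set.disjoint_prod.mpr (Or.inr (hAdisj hqq'))
    have hLHS : Measure.map h (volume.withDensity fstar) S =
        ∑' q, ∫⁻ a in B q, G q a ∂(volume : Measure (Fin p₁ → ℝ)) := by
      rw [Measure.map_apply hhmeas hS, hpre,
        measure_iUnion hdisj (fun q => (hBmeas q).prod (hAmeas q))]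
      congr 1
      ext q
      rw [withDensity_apply _ ((hBmeas q).prod (hAmeas q)), Measure.volume_eq_prod,
        ← Measure.prod_restrict, MeasureTheory.lintegral_prod _ hfstar_meas.aemeasurable]
    -- change of variables
    have hcov : ∀ q, (∫⁻ a in B q, G q a ∂(volume : Measure (Fin p₁ → ℝ))) =
        ∫⁻ y in Yset, ENNReal.ofReal |(J y).det| * (B q).indicator (G q) (h₁inv y) := by
      intro q
      have := lintegral_image_eq_lintegral_abs_det_fderiv_mul volume hYmeas hderiv hinj
        ((B q).indicator (G q))
      rw [himg, Measure.restrict_univ, lintegral_indicator (hBmeas q)] at this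
      exact this
    -- RHS
    have hcount : (Measure.count : Measure Q) = Measure.sum Measure.dirac := rfl
    have hRHS : ((volume.restrict Yset).prod (Measure.count : Measure Q)).withDensity g S =
        ∑' q, ∫⁻ y in Yset, S.indicator g (y, q) := by
      rw [withDensity_apply _ hS, ← lintegral_indicator hS, hcount,
        Measure.prod_sum_right, lintegral_sum_measure]
      congr 1
      ext q
      have he : MeasurableEmbedding (fun x : Fin p₁ → ℝ => (x, q)) :=
        MeasurableEmbedding.id.prodMk_right q
      rw [Measure.prod_dirac, he.lintegral_map]
    rw [hLHS, hRHS]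
    congr 1
    ext q
    rw [hcov q]
    refine setLIntegral_congr_fun hYmeas (fun y hy => ?_) 
    have hmem : h₁inv y ∈ B q ↔ (y, q) ∈ S := by
      simp only [hB, Set.mem_preimage, Set.mem_setOf_eq, hright y hy]
    by_cases hys : (y, q) ∈ S
    · rw [Set.indicator_of_mem (hmem.mpr hys), Set.indicator_of_mem hys, hg, mul_comm]
    · rw [Set.indicator_of_notMem (fun c => hys (hmem.mp c)), Set.indicator_of_notMem hys,
        mul_zero]
  exact ⟨key ▸ withDensity_absolutelyContinuous _ _, key⟩
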